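/- Under the assumptions of the previous grid construction (A1): for each α ∈ A, the multivariate Newton polynomial N_α(x) = ∏_{i=1}^m ∏_{j=0}^{α_i−1}(x_i − p_{j,i}) lies in Π_A, and the collection {N_α}_{α∈A} is a basis of Π_A = span{x^α : α ∈ A}. -/

import Mathlib

open MvPolynomial

/-- Newton basis. Under the grid assumptions (A1), for each `α ∈ A` the
multivariate Newton polynomial `N_α(x) = ∏_i ∏_{j<α_i} (x_i - p_{j,i})` lies in
`Π_A = span{x^α : α ∈ A}`, and the family `{N_α}_{α ∈ A}` is a basis of `Π_A`
(linearly independent and spanning). -/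
theorem newton_basis (m : ℕ) (A : Finset (Fin m →₀ ℕ))
    (hdc : ∀ α ∈ A, ∀ β : Fin m →₀ ℕ, (∀ i, β i ≤ α i) → β ∈ A)
    (p : Fin m → ℕ → ℝ)
    (hdist : ∀ i : Fin m, ∀ j ≤ A.sup (fun α => α i), ∀ j' ≤ A.sup (fun α => α i),
      j ≠ j' → p i j ≠ p i j')
    (N : (Fin m →₀ ℕ) → MvPolynomial (Fin m) ℝ)
    (hN : ∀ α : Fin m →₀ ℕ,
      N α = ∏ i : Fin m, ∏ j ∈ Finset.range (α i), (X i - C (p i j))) :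
    (∀ α ∈ A, N α ∈ Submodule.span ℝ ((fun α : Fin m →₀ ℕ => (monomial α (1 : ℝ))) '' A)) ∧
    LinearIndependent ℝ (fun α : A => N α) ∧
    Submodule.span ℝ (N '' A) =
      Submodule.span ℝ ((fun α : Fin m →₀ ℕ => (monomial α (1 : ℝ))) '' A) := by
  classical
  -- degree bound on each factor
  have hXC : ∀ (i k : Fin m) (c : ℝ),
      degreeOf i (X k - C c : MvPolynomial (Fin m) ℝ) ≤ (Finsupp.single k 1 : Fin m →₀ ℕ) i := by
    intro i k c
    rw [degreeOf_eq_sup]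
    apply Finset.sup_le
    intro s hs
    have hs' := MvPolynomial.support_sub _ _ _ hs
    rw [support_X] at hs'
    rcases Finset.mem_union.1 hs' with h | h
    · rw [Finset.mem_singleton.1 h]
    · have : s = 0 := by
        have h2 : s ∈ (monomial 0 c : MvPolynomial (Fin m) ℝ).support := h
        simpa using support_monomial_subset h2
      simp [this]
  -- support of N α is below α
  have hsupp : ∀ α : Fin m →₀ ℕ, ∀ γ ∈ (N α).support, ∀ i, γ i ≤ α i := by
    intro α γ hγ i
    have h1 : degreeOf i (N α) ≤ α i := by
      rw [hN]
      calc degreeOf i (∏ k : Fin m, ∏ j ∈ Finset.range (α k), (X k - C (p k j)))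
          ≤ ∑ k : Fin m, degreeOf i (∏ j ∈ Finset.range (α k), (X k - C (p k j))) :=
            degreeOf_prod_le _ _ _
        _ ≤ ∑ k : Fin m, ∑ j ∈ Finset.range (α k),
              degreeOf i (X k - C (p k j) : MvPolynomial (Fin m) ℝ) :=
            Finset.sum_le_sum fun k _ => degreeOf_prod_le _ _ _
        _ ≤ ∑ k : Fin m, ∑ _j ∈ Finset.range (α k), (Finsupp.single k 1 : Fin m →₀ ℕ) i :=
            Finset.sum_le_sum fun k _ => Finset.sum_le_sum fun j _ => hXC i k (p k j)
        _ = α i := by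
            simp [Finsupp.single_apply, Finset.sum_ite_eq]
    calc γ i ≤ degreeOf i (N α) := by rw [degreeOf_eq_sup]; exact Finset.le_sup (f := fun γ : Fin m →₀ ℕ => γ i) hγ
      _ ≤ α i := h1
  -- part 1 : membership
  have hmem : ∀ α ∈ A, N α ∈ Submodule.span ℝ
      ((fun α : Fin m →₀ ℕ => (monomial α (1 : ℝ))) '' A) := by
    intro α hα
    rw [← support_sum_monomial_coeff (N α)]
    apply Submodule.sum_mem
    intro v hv
    have hvA : v ∈ A := hdc α hα v (hsupp α v hv)
    have : (monomial v (coeff v (N α)) : MvPolynomial (Fin m) ℝ)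
        = (coeff v (N α)) • monomial v (1 : ℝ) := by
      rw [smul_monomial, smul_eq_mul, mul_one]
    rw [this]
    exact Submodule.smul_mem _ _ (Submodule.subset_span ⟨v, hvA, rfl⟩)
  -- evaluation facts
  set q : (Fin m →₀ ℕ) → Fin m → ℝ := fun β i => p i (β i) with hq
  have hev0 : ∀ α β : Fin m →₀ ℕ, (∃ i, β i < α i) → eval (q β) (N α) = 0 := by
    rintro α β ⟨i, hi⟩
    rw [hN, map_prod]
    apply Finset.prod_eq_zero (Finset.mem_univ i)
    rw [map_prod]
    apply Finset.prod_eq_zero (Finset.mem_range.2 hi)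
    simp [hq]
  have hevne : ∀ β ∈ A, eval (q β) (N β) ≠ 0 := by
    intro β hβ
    rw [hN, map_prod]
    apply Finset.prod_ne_zero_iff.2
    intro i _
    rw [map_prod]
    apply Finset.prod_ne_zero_iff.2
    intro j hj
    rw [Finset.mem_range] at hj
    have hβi : β i ≤ A.sup (fun α => α i) := Finset.le_sup (f := fun α => α i) hβ
    have : p i (β i) ≠ p i j :=
      hdist i (β i) hβi j (le_trans hj.le hβi) (Nat.ne_of_gt hj)
    simp only [map_sub, eval_X, eval_C]
    exact sub_ne_zero.2 this
  -- linear independence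
  have hli : LinearIndependent ℝ (fun α : A => N α) := by
    rw [linearIndependent_iff']
    intro s g hsum
    by_contra hc
    push_neg at hc
    obtain ⟨a, has, hga⟩ := hc
    set T : Finset A := s.filter (fun α => g α ≠ 0) with hT
    have hTne : T.Nonempty := ⟨a, by simp [hT, has, hga]⟩
    obtain ⟨β, hβT, hβmin⟩ := Finset.exists_minimal hTne
    have hβs : β ∈ s := Finset.mem_of_mem_filter β hβT
    have hgβ : g β ≠ 0 := (Finset.mem_filter.1 hβT).2
    have hev := congrArg (eval (q β.1)) hsum
    rw [map_sum, map_zero] at hev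
    have hzero : ∀ α ∈ s, α ≠ β → eval (q β.1) (g α • N α.1) = 0 := by
      intro α hαs hαβ
      by_cases hgα : g α = 0
      · simp [hgα]
      have hαT : α ∈ T := Finset.mem_filter.2 ⟨hαs, hgα⟩
      have hnle : ∃ i, (β : Fin m →₀ ℕ) i < (α : Fin m →₀ ℕ) i := by
        by_contra hle
        push_neg at hle
        have hle' : (α : Fin m →₀ ℕ) ≤ (β : Fin m →₀ ℕ) := Finsupp.le_def.2 hle
        have : α < β := by
          refine lt_of_le_of_ne ?_ hαβ
          exact hle'
        exact this.not_ge (hβmin hαT this.le)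
      rw [smul_eval, hev0 _ _ hnle, mul_zero]
    rw [Finset.sum_eq_single_of_mem β hβs (fun α hαs hαβ => hzero α hαs hαβ)] at hev
    rw [smul_eval] at hev
    exact hgβ ((mul_eq_zero.1 hev).resolve_right (hevne β.1 β.2))
  refine ⟨hmem, hli, ?_⟩
  -- span equality via dimension
  have hle : Submodule.span ℝ (N '' A) ≤
      Submodule.span ℝ ((fun α : Fin m →₀ ℕ => (monomial α (1 : ℝ))) '' A) := by
    rw [Submodule.span_le]
    rintro _ ⟨α, hα, rfl⟩
    exact hmem α hα
  have hmono_li : LinearIndependent ℝ (fun α : A => (monomial (α : Fin m →₀ ℕ) (1 : ℝ))) := by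
    have := (basisMonomials (Fin m) ℝ).linearIndependent
    rw [coe_basisMonomials] at this
    exact this.comp _ Subtype.val_injective
  have himg1 : N '' (A : Set (Fin m →₀ ℕ)) = Set.range (fun α : A => N α) := by
    ext x; simp [Set.mem_range]
  have himg2 : (fun α : Fin m →₀ ℕ => (monomial α (1 : ℝ))) '' (A : Set (Fin m →₀ ℕ))
      = Set.range (fun α : A => (monomial (α : Fin m →₀ ℕ) (1 : ℝ))) := by
    ext x; simp [Set.mem_range]
  have h1 : Module.finrank ℝ (Submodule.span ℝ (N '' A)) = A.card := by
    rw [himg1, finrank_span_eq_card hli]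
    exact Fintype.card_coe A
  have h2 : Module.finrank ℝ
      (Submodule.span ℝ ((fun α : Fin m →₀ ℕ => (monomial α (1 : ℝ))) '' A)) = A.card := by
    rw [himg2, finrank_span_eq_card hmono_li]
    exact Fintype.card_coe A
  have : FiniteDimensional ℝ
      (Submodule.span ℝ ((fun α : Fin m →₀ ℕ => (monomial α (1 : ℝ))) '' A)) :=
    FiniteDimensional.span_of_finite ℝ ((A.finite_toSet).image _)
  exact Submodule.eq_of_le_of_finrank_le hle (by rw [h1, h2])
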